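/- arXiv:2407.00623 — 2 statements merged into one kernel-verified Lean document; each statement's English description precedes it below -/
import Mathlib

section
/- Let (Ω, ℱ, ℙ) be a probability space, let X : Ω → ℝ be a random variable with ℙ(X = 1) = ℙ(X = −1) = 1/2, let ε : Ω → ℝ be a standard Gaussian random variable independent of X, and fix t > 0. Set X_t = X + t·ε. Then the conditional expectation of X given (the σ-algebra generated by) X_t satisfies E[X | X_t] = tanh(X_t / t²) almost surely. -/
open MeasureTheory ProbabilityTheory Real
open scoped ENNReal NNReal

lemma pm_smul_prod {α β : Type*} [MeasurableSpace α] [MeasurableSpace β]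
    (c : ℝ≥0∞) (μ : Measure α) (ν : Measure β) [SFinite ν] :
    (c • μ).prod ν = c • (μ.prod ν) := by
  ext s hs
  rw [Measure.smul_apply, Measure.prod_apply hs, Measure.prod_apply hs,
    lintegral_smul_measure, smul_eq_mul]

lemma pm_gauss_integral (m : ℝ) (V : ℝ≥0) (hV : V ≠ 0) (g : ℝ → ℝ) :
    ∫ y, g y ∂(gaussianReal m V) = ∫ y, gaussianPDFReal m V y * g y := by
  rw [gaussianReal_of_var_ne_zero m hV]
  have h : (gaussianPDF m V) = fun x => ((gaussianPDFReal m V x).toNNReal : ℝ≥0∞) := rfl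
  rw [h, integral_withDensity_eq_integral_smul
    ((measurable_gaussianPDFReal m V).real_toNNReal) g]
  congr 1
  ext y
  rw [NNReal.smul_def, smul_eq_mul, Real.coe_toNNReal _ (gaussianPDFReal_nonneg m V y)]

lemma pm_law_X {Ω : Type*} [MeasurableSpace Ω] (P : Measure Ω) [IsProbabilityMeasure P]
    (X : Ω → ℝ) (hX : Measurable X)
    (hX1 : P {ω | X ω = 1} = 1 / 2) (hXm1 : P {ω | X ω = -1} = 1 / 2) :
    P.map X = (1/2 : ℝ≥0∞) • Measure.dirac (1 : ℝ) + (1/2 : ℝ≥0∞) • Measure.dirac (-1 : ℝ) := by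
  classical
  have hA : MeasurableSet (X ⁻¹' {(1:ℝ)}) := hX (measurableSet_singleton _)
  have hB : MeasurableSet (X ⁻¹' {(-1:ℝ)}) := hX (measurableSet_singleton _)
  have hAe : X ⁻¹' {(1:ℝ)} = {ω | X ω = 1} := rfl
  have hBe : X ⁻¹' {(-1:ℝ)} = {ω | X ω = -1} := rfl
  have hdisj : Disjoint (X ⁻¹' {(1:ℝ)}) (X ⁻¹' {(-1:ℝ)}) := by
    apply Set.disjoint_left.mpr
    intro ω h1 h2
    simp only [Set.mem_preimage, Set.mem_singleton_iff] at h1 h2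
    rw [h1] at h2; norm_num at h2
  have hunion : P (X ⁻¹' {(1:ℝ)} ∪ X ⁻¹' {(-1:ℝ)}) = 1 := by
    rw [measure_union hdisj hB, hAe, hBe, hX1, hXm1]
    rw [ENNReal.div_add_div_same, one_add_one_eq_two, ENNReal.div_self] <;> norm_num
  have hcompl : P ((X ⁻¹' {(1:ℝ)} ∪ X ⁻¹' {(-1:ℝ)})ᶜ) = 0 := by
    rw [measure_compl (hA.union hB) (measure_ne_top _ _), hunion, measure_univ]
    simp
  ext s hs
  rw [Measure.map_apply hX hs]
  have hsm : MeasurableSet (X ⁻¹' s) := hX hs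
  have key : ∀ x : ℝ, P (X ⁻¹' s ∩ X ⁻¹' {x})
      = if x ∈ s then P (X ⁻¹' {x}) else 0 := by
    intro x
    by_cases hx : x ∈ s
    · rw [if_pos hx]
      congr 1
      ext ω
      simp only [Set.mem_inter_iff, Set.mem_preimage, Set.mem_singleton_iff]
      constructor
      · rintro ⟨-, h⟩; exact h
      · rintro h; exact ⟨by rw [h]; exact hx, h⟩
    · rw [if_neg hx]
      have : X ⁻¹' s ∩ X ⁻¹' {x} = ∅ := by
        ext ω
        simp only [Set.mem_inter_iff, Set.mem_preimage, Set.mem_singleton_iff,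
          Set.mem_empty_iff_false, iff_false, not_and]
        intro h1 h2
        rw [h2] at h1; exact hx h1
      rw [this, measure_empty]
  have hdecomp : P (X ⁻¹' s)
      = P (X ⁻¹' s ∩ X ⁻¹' {(1:ℝ)}) + P (X ⁻¹' s ∩ X ⁻¹' {(-1:ℝ)}) := by
    have h1 := measure_inter_add_diff (μ := P) (X ⁻¹' s) (hA.union hB)
    have h0 : P (X ⁻¹' s \ (X ⁻¹' {(1:ℝ)} ∪ X ⁻¹' {(-1:ℝ)})) = 0 := by
      refine measure_mono_null ?_ hcompl
      intro ω hω
      exact hω.2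
    have h2 : P (X ⁻¹' s ∩ (X ⁻¹' {(1:ℝ)} ∪ X ⁻¹' {(-1:ℝ)}))
        = P (X ⁻¹' s ∩ X ⁻¹' {(1:ℝ)}) + P (X ⁻¹' s ∩ X ⁻¹' {(-1:ℝ)}) := by
      rw [Set.inter_union_distrib_left]
      exact measure_union (hdisj.mono Set.inter_subset_right Set.inter_subset_right)
        (hsm.inter hB)
    rw [← h1, h0, add_zero, h2]
  rw [hdecomp, key 1, key (-1), hAe, hBe, hX1, hXm1]
  rw [Measure.add_apply, Measure.smul_apply, Measure.smul_apply,
    Measure.dirac_apply' _ hs, Measure.dirac_apply' _ hs]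
  by_cases h1s : (1:ℝ) ∈ s <;> by_cases hm1s : (-1:ℝ) ∈ s <;>
    simp [h1s, hm1s, Set.indicator_apply]

lemma pm_two_point_prod (ν : Measure ℝ) [SFinite ν] :
    ((1/2 : ℝ≥0∞) • Measure.dirac (1:ℝ) + (1/2 : ℝ≥0∞) • Measure.dirac (-1:ℝ)).prod ν
      = (1/2 : ℝ≥0∞) • ν.map (Prod.mk (1:ℝ)) + (1/2 : ℝ≥0∞) • ν.map (Prod.mk (-1:ℝ)) := by
  ext s hs
  rw [Measure.prod_apply hs, lintegral_add_measure, lintegral_smul_measure,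
    lintegral_smul_measure,
    lintegral_dirac' _ (measurable_measure_prodMk_left hs),
    lintegral_dirac' _ (measurable_measure_prodMk_left hs),
    Measure.add_apply, Measure.smul_apply, Measure.smul_apply,
    Measure.map_apply measurable_prodMk_left hs,
    Measure.map_apply measurable_prodMk_left hs, smul_eq_mul, smul_eq_mul]

lemma pm_continuous_tanh : Continuous Real.tanh := by
  have h : Real.tanh = fun x => Real.sinh x / Real.cosh x := by
    funext x; exact Real.tanh_eq_sinh_div_cosh x
  rw [h]
  exact Real.continuous_sinh.div Real.continuous_cosh fun x => (Real.cosh_pos x).ne'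

lemma pm_abs_tanh_le (x : ℝ) : |Real.tanh x| ≤ 1 := by
  rw [Real.tanh_eq_sinh_div_cosh, abs_div, abs_of_pos (Real.cosh_pos x),
    div_le_one (Real.cosh_pos x), abs_le]
  constructor
  · have h := Real.sinh_lt_cosh (-x)
    rw [Real.sinh_neg, Real.cosh_neg] at h
    linarith
  · exact le_of_lt (Real.sinh_lt_cosh x)

lemma pm_pdf_identity (t : ℝ) (ht : 0 < t) (y : ℝ) :
    gaussianPDFReal 1 ⟨t^2, sq_nonneg t⟩ y - gaussianPDFReal (-1) ⟨t^2, sq_nonneg t⟩ y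
      = Real.tanh (y / t^2) *
        (gaussianPDFReal 1 ⟨t^2, sq_nonneg t⟩ y + gaussianPDFReal (-1) ⟨t^2, sq_nonneg t⟩ y) := by
  have ht2 : (t:ℝ)^2 ≠ 0 := by positivity
  simp only [gaussianPDFReal, NNReal.coe_mk, sub_neg_eq_add]
  show (√(2 * π * t^2))⁻¹ * rexp (-(y - 1)^2 / (2 * t^2)) - (√(2 * π * t^2))⁻¹ * rexp (-(y + 1)^2 / (2 * t^2))
    = Real.tanh (y / t^2) * ((√(2 * π * t^2))⁻¹ * rexp (-(y - 1)^2 / (2 * t^2)) + (√(2 * π * t^2))⁻¹ * rexp (-(y + 1)^2 / (2 * t^2)))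
  set c := (√(2 * π * t^2))⁻¹ with hc
  have e1 : rexp (-(y - 1)^2 / (2 * t^2))
      = rexp (-(y^2 + 1) / (2 * t^2)) * rexp (y / t^2) := by
    rw [← Real.exp_add]; congr 1; field_simp; ring
  have e2 : rexp (-(y + 1)^2 / (2 * t^2))
      = rexp (-(y^2 + 1) / (2 * t^2)) * rexp (-(y / t^2)) := by
    rw [← Real.exp_add]; congr 1; field_simp; ring
  rw [e1, e2, Real.tanh_eq_sinh_div_cosh, Real.sinh_eq, Real.cosh_eq]
  have hpos : rexp (y / t^2) + rexp (-(y / t^2)) ≠ 0 := by positivity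
  field_simp

/-- **Posterior mean of Example 3.1.** Let `X` be a ±1-valued random variable with
`P(X = 1) = P(X = −1) = 1/2`, let `ε` be a standard Gaussian independent of `X`, fix `t > 0`
and set `X_t = X + t·ε`. Then `E[X | X_t] = tanh(X_t / t²)` almost surely. -/
theorem posterior_mean_two_point {Ω : Type*} [MeasurableSpace Ω]
    (P : Measure Ω) [IsProbabilityMeasure P]
    (X ε : Ω → ℝ) (hX : Measurable X) (hε : Measurable ε)
    (hX1 : P {ω | X ω = 1} = 1 / 2) (hXm1 : P {ω | X ω = -1} = 1 / 2)
    (hεlaw : P.map ε = gaussianReal 0 1)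
    (hindep : IndepFun X ε P)
    (t : ℝ) (ht : 0 < t) :
    P[X | MeasurableSpace.comap (fun ω => X ω + t * ε ω) inferInstance] =ᵐ[P]
      fun ω => Real.tanh ((X ω + t * ε ω) / t ^ 2) := by
  classical
  set Y : Ω → ℝ := fun ω => X ω + t * ε ω with hYdef
  have hY : Measurable Y := hX.add (hε.const_mul t)
  have hm : MeasurableSpace.comap Y inferInstance ≤ ‹MeasurableSpace Ω› := hY.comap_le
  set V : ℝ≥0 := ⟨t^2, sq_nonneg t⟩ with hVdef
  have hV : V ≠ 0 := by
    intro h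
    have : (t:ℝ)^2 = 0 := congrArg NNReal.toReal h
    exact (pow_ne_zero 2 ht.ne') this
  -- X takes values ±1 a.s.
  have haeX : ∀ᵐ ω ∂P, X ω = 1 ∨ X ω = -1 := by
    have hA : MeasurableSet {ω | X ω = (1:ℝ)} := hX (measurableSet_singleton 1)
    have hB : MeasurableSet {ω | X ω = (-1:ℝ)} := hX (measurableSet_singleton (-1))
    have hdisj : Disjoint {ω | X ω = (1:ℝ)} {ω | X ω = (-1:ℝ)} := by
      apply Set.disjoint_left.mpr
      intro ω h1 h2
      simp only [Set.mem_setOf_eq] at h1 h2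
      rw [h1] at h2; norm_num at h2
    have hunion : P ({ω | X ω = (1:ℝ)} ∪ {ω | X ω = (-1:ℝ)}) = 1 := by
      rw [measure_union hdisj hB, hX1, hXm1]
      rw [ENNReal.div_add_div_same, one_add_one_eq_two, ENNReal.div_self] <;> norm_num
    have hcompl : P (({ω | X ω = (1:ℝ)} ∪ {ω | X ω = (-1:ℝ)})ᶜ) = 0 := by
      rw [measure_compl (hA.union hB) (measure_ne_top _ _), hunion, measure_univ]
      simp
    have hseteq : {a | ¬(X a = 1 ∨ X a = -1)}
        = ({ω | X ω = (1:ℝ)} ∪ {ω | X ω = (-1:ℝ)})ᶜ := by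
      ext ω; simp [not_or]
    rw [ae_iff, hseteq]
    exact hcompl
  have hXint : Integrable X P := by
    refine Integrable.mono' (integrable_const 1) hX.aestronglyMeasurable ?_
    filter_upwards [haeX] with ω h
    rcases h with h | h <;> simp [h]
  -- the target function is m-measurable
  have hgm : AEStronglyMeasurable[MeasurableSpace.comap Y inferInstance]
      (fun ω => Real.tanh (Y ω / t ^ 2)) P := by
    refine StronglyMeasurable.aestronglyMeasurable ?_
    refine Measurable.stronglyMeasurable ?_
    have hYm : Measurable[MeasurableSpace.comap Y inferInstance] Y :=
      Measurable.of_comap_le le_rfl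
    exact pm_continuous_tanh.measurable.comp (hYm.div_const _)
  have hgbound : ∀ ω, ‖Real.tanh (Y ω / t ^ 2)‖ ≤ 1 := fun ω => pm_abs_tanh_le _
  have hgint : Integrable (fun ω => Real.tanh (Y ω / t ^ 2)) P := by
    refine Integrable.mono' (integrable_const 1) ?_ (ae_of_all _ hgbound)
    exact (pm_continuous_tanh.measurable.comp (hY.div_const _)).aestronglyMeasurable
  -- transfer lemma: integrals of F (X, ε) against P
  have hγ : IsProbabilityMeasure (P.map ε) := by rw [hεlaw]; infer_instance
  haveI hsf : SFinite (P.map ε) := by rw [hεlaw]; infer_instance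
  have hpair : Measurable fun ω => (X ω, ε ω) := hX.prodMk hε
  have hmapP : P.map (fun ω => (X ω, ε ω)) = (P.map X).prod (P.map ε) :=
    (indepFun_iff_map_prod_eq_prod_map_map hX.aemeasurable hε.aemeasurable).mp hindep
  have hprod : (P.map X).prod (P.map ε)
      = (1/2 : ℝ≥0∞) • (P.map ε).map (Prod.mk (1:ℝ))
        + (1/2 : ℝ≥0∞) • (P.map ε).map (Prod.mk (-1:ℝ)) := by
    rw [pm_law_X P X hX hX1 hXm1]
    exact pm_two_point_prod (P.map ε)
  have key : ∀ F : ℝ × ℝ → ℝ, Measurable F →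
      (∀ e, ‖F (1, e)‖ ≤ 1) → (∀ e, ‖F (-1, e)‖ ≤ 1) →
      ∫ ω, F (X ω, ε ω) ∂P
        = (1/2 : ℝ) * ∫ e, F (1, e) ∂(P.map ε)
          + (1/2 : ℝ) * ∫ e, F (-1, e) ∂(P.map ε) := by
    intro F hF hb1 hbm1
    have h1 : ∫ ω, F (X ω, ε ω) ∂P = ∫ p, F p ∂(P.map (fun ω => (X ω, ε ω))) :=
      (integral_map hpair.aemeasurable hF.aestronglyMeasurable).symm
    rw [h1, hmapP, hprod]
    have hint : ∀ x₀ : ℝ, (∀ e, ‖F (x₀, e)‖ ≤ 1) →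
        Integrable F ((P.map ε).map (Prod.mk x₀)) := by
      intro x₀ hb
      rw [integrable_map_measure hF.aestronglyMeasurable
        measurable_prodMk_left.aemeasurable]
      exact Integrable.mono' (integrable_const 1)
        (hF.comp measurable_prodMk_left).aestronglyMeasurable (ae_of_all _ hb)
    rw [integral_add_measure ((hint 1 hb1).smul_measure (by norm_num))
      ((hint (-1) hbm1).smul_measure (by norm_num)),
      integral_smul_measure, integral_smul_measure,
      integral_map measurable_prodMk_left.aemeasurable hF.aestronglyMeasurable,
      integral_map measurable_prodMk_left.aemeasurable hF.aestronglyMeasurable]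
    norm_num
  -- transfer to gaussian on ℝ, then to Lebesgue with density
  have htrans : ∀ (x₀ : ℝ) (G : ℝ → ℝ), Measurable G →
      ∫ e, G (x₀ + t * e) ∂(P.map ε) = ∫ y, gaussianPDFReal x₀ V y * G y := by
    intro x₀ G hG
    have hmapx : (P.map ε).map (fun e => x₀ + t * e) = gaussianReal x₀ V := by
      rw [hεlaw]
      have hcomp : (fun e : ℝ => x₀ + t * e) = (fun z => x₀ + z) ∘ (fun e => t * e) := rfl
      rw [hcomp, ← Measure.map_map (measurable_const_add x₀) (measurable_const_mul t)]
      have h1 : (gaussianReal 0 1).map (fun e => t * e) = gaussianReal (t * 0) (V * 1) :=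
        gaussianReal_map_const_mul t
      rw [h1]
      have h2 : (gaussianReal (t * 0) (V * 1)).map (fun z => x₀ + z)
          = gaussianReal (t * 0 + x₀) (V * 1) :=
        gaussianReal_map_const_add x₀
      rw [h2, mul_zero, zero_add, mul_one]
    have h3 : ∫ y, G y ∂((P.map ε).map (fun e => x₀ + t * e))
        = ∫ e, G (x₀ + t * e) ∂(P.map ε) :=
      integral_map (by fun_prop) hG.aestronglyMeasurable
    rw [← h3, hmapx, pm_gauss_integral x₀ V hV G]
  -- apply uniqueness of conditional expectation
  refine (ae_eq_condExp_of_forall_setIntegral_eq hm hXint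
    (fun s _ _ => hgint.integrableOn) ?_ hgm).symm
  rintro s ⟨B, hB, rfl⟩ -
  have hYB : MeasurableSet (Y ⁻¹' B) := hY hB
  -- functions on the product space
  set F₁ : ℝ × ℝ → ℝ := fun p => p.1 * Set.indicator B (fun _ => (1:ℝ)) (p.1 + t * p.2)
    with hF₁def
  set F₂ : ℝ × ℝ → ℝ :=
    fun p => Set.indicator B (fun y => Real.tanh (y / t^2)) (p.1 + t * p.2) with hF₂def
  have hBmeas1 : Measurable (Set.indicator B (fun _ => (1:ℝ))) :=
    measurable_const.indicator hB
  have hBmeas2 : Measurable (Set.indicator B (fun y => Real.tanh (y / t^2))) :=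
    (pm_continuous_tanh.measurable.comp (measurable_id.div_const _)).indicator hB
  have haffine : Measurable fun p : ℝ × ℝ => p.1 + t * p.2 :=
    measurable_fst.add (measurable_snd.const_mul t)
  have hF₁ : Measurable F₁ := measurable_fst.mul (hBmeas1.comp haffine)
  have hF₂ : Measurable F₂ := hBmeas2.comp haffine
  have hind_le : ∀ z, ‖Set.indicator B (fun _ => (1:ℝ)) z‖ ≤ 1 := by
    intro z
    rw [Set.indicator_apply]
    split_ifs <;> norm_num
  have htanh_le : ∀ z, ‖Set.indicator B (fun y => Real.tanh (y / t^2)) z‖ ≤ 1 := by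
    intro z
    rw [Set.indicator_apply]
    split_ifs
    · exact pm_abs_tanh_le _
    · norm_num
  have hb11 : ∀ e, ‖F₁ (1, e)‖ ≤ 1 := by
    intro e; simp only [hF₁def, one_mul]; exact hind_le _
  have hb1m1 : ∀ e, ‖F₁ (-1, e)‖ ≤ 1 := by
    intro e
    simp only [hF₁def, neg_one_mul, norm_neg]
    exact hind_le _
  have hb21 : ∀ e, ‖F₂ (1, e)‖ ≤ 1 := fun e => htanh_le _
  have hb2m1 : ∀ e, ‖F₂ (-1, e)‖ ≤ 1 := fun e => htanh_le _
  -- rewrite both set integrals as integrals of F (X ω, ε ω)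
  have hset1 : ∫ ω in Y ⁻¹' B, X ω ∂P = ∫ ω, F₁ (X ω, ε ω) ∂P := by
    rw [← integral_indicator hYB]
    congr 1
    funext ω
    simp only [hF₁def, Set.indicator_apply, Set.mem_preimage, hYdef]
    split_ifs <;> simp
  have hset2 : ∫ ω in Y ⁻¹' B, Real.tanh (Y ω / t^2) ∂P = ∫ ω, F₂ (X ω, ε ω) ∂P := by
    rw [← integral_indicator hYB]
    refine integral_congr_ae (ae_of_all _ fun ω => ?_)
    by_cases h : Y ω ∈ B
    · simp [hF₂def, Set.indicator_apply, Set.mem_preimage, h, hYdef]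
    · simp [hF₂def, Set.indicator_apply, Set.mem_preimage, h, hYdef]
  -- compute all four one-dimensional integrals
  have e11 : ∫ e, F₁ (1, e) ∂(P.map ε)
      = ∫ y, gaussianPDFReal 1 V y * (1 * Set.indicator B (fun _ => (1:ℝ)) y) := by
    have := htrans 1 (fun y => 1 * Set.indicator B (fun _ => (1:ℝ)) y)
      (measurable_const.mul hBmeas1)
    exact this
  have e1m1 : ∫ e, F₁ (-1, e) ∂(P.map ε)
      = ∫ y, gaussianPDFReal (-1) V y * ((-1) * Set.indicator B (fun _ => (1:ℝ)) y) := by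
    exact htrans (-1) (fun y => (-1) * Set.indicator B (fun _ => (1:ℝ)) y)
      (measurable_const.mul hBmeas1)
  have e21 : ∫ e, F₂ (1, e) ∂(P.map ε)
      = ∫ y, gaussianPDFReal 1 V y * Set.indicator B (fun y => Real.tanh (y / t^2)) y :=
    htrans 1 _ hBmeas2
  have e2m1 : ∫ e, F₂ (-1, e) ∂(P.map ε)
      = ∫ y, gaussianPDFReal (-1) V y * Set.indicator B (fun y => Real.tanh (y / t^2)) y :=
    htrans (-1) _ hBmeas2
  rw [hset1, hset2, key F₁ hF₁ hb11 hb1m1, key F₂ hF₂ hb21 hb2m1,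
    e11, e1m1, e21, e2m1]
  -- integrability of density-weighted bounded functions
  have hInt : ∀ (m : ℝ) (φ : ℝ → ℝ), Measurable φ → (∀ y, ‖φ y‖ ≤ 1) →
      Integrable (fun y => gaussianPDFReal m V y * φ y) := by
    intro m φ hφ hbφ
    refine Integrable.mono' (integrable_gaussianPDFReal m V)
      ((measurable_gaussianPDFReal m V).mul hφ).aestronglyMeasurable
      (ae_of_all _ fun y => ?_)
    rw [norm_mul]
    calc ‖gaussianPDFReal m V y‖ * ‖φ y‖ ≤ ‖gaussianPDFReal m V y‖ * 1 :=
          mul_le_mul_of_nonneg_left (hbφ y) (norm_nonneg _)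
      _ = gaussianPDFReal m V y := by
          rw [mul_one, Real.norm_eq_abs, abs_of_nonneg (gaussianPDFReal_nonneg m V y)]
  have i1 := hInt 1 _ hBmeas2 htanh_le
  have i2 := hInt (-1) _ hBmeas2 htanh_le
  have i3 := hInt 1 (fun y => 1 * Set.indicator B (fun _ => (1:ℝ)) y)
    (measurable_const.mul hBmeas1) (fun y => by simpa using hind_le y)
  have i4 := hInt (-1) (fun y => (-1) * Set.indicator B (fun _ => (1:ℝ)) y)
    (measurable_const.mul hBmeas1) (fun y => by simpa using hind_le y)
  rw [← mul_add (1/2 : ℝ), ← mul_add (1/2 : ℝ), ← integral_add i1 i2, ← integral_add i3 i4]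
  congr 1
  apply integral_congr_ae
  apply ae_of_all
  intro y
  by_cases hy : y ∈ B
  · simp only [Set.indicator_of_mem hy]
    have h := pm_pdf_identity t ht y
    rw [hVdef]
    linear_combination (-1 : ℝ) * h
  · simp [Set.indicator_of_notMem hy]
end

section
/- Let T > 0 and let x : (0, T] → ℝ be differentiable and satisfy x′(t) = x(t)/t − (1/t)·tanh(x(t)/t²) for all t ∈ (0, T]. If x(t) > 0 for all t ∈ (0, T], then x(t) → 1 as t → 0⁺; if x(t) < 0 for all t ∈ (0, T], then x(t) → −1 as t → 0⁺. -/
open Real Set Filter MeasureTheory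

noncomputable def gpdf (s : ℝ) : ℝ := Real.exp (-(1/2) * s ^ 2)

noncomputable def Psi (y : ℝ) : ℝ := ∫ s in (0:ℝ)..y, gpdf s

noncomputable def Shalf : ℝ := ∫ s in Set.Ioi (0:ℝ), gpdf s

lemma gpdf_pos (s : ℝ) : 0 < gpdf s := Real.exp_pos _

lemma gpdf_cont : Continuous gpdf := by
  unfold gpdf; continuity

lemma gpdf_int : Integrable gpdf := integrable_exp_neg_mul_sq (by norm_num)

lemma psi_hasDerivAt (y : ℝ) : HasDerivAt Psi (gpdf y) y :=
  (gpdf_cont.integral_hasStrictDerivAt 0 y).hasDerivAt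

lemma psi_mono : StrictMono Psi := by
  apply strictMono_of_deriv_pos
  intro y
  rw [(psi_hasDerivAt y).deriv]
  exact gpdf_pos y

lemma psi_tendsto_atTop : Tendsto Psi atTop (nhds Shalf) :=
  intervalIntegral_tendsto_integral_Ioi 0 gpdf_int.integrableOn tendsto_id

lemma psi_lt_shalf (y : ℝ) : Psi y < Shalf := by
  have h1 : Psi (y + 1) ≤ Shalf := by
    refine ge_of_tendsto psi_tendsto_atTop ?_
    filter_upwards [eventually_ge_atTop (y + 1)] with z hz
    exact psi_mono.monotone hz
  exact lt_of_lt_of_le (psi_mono (by linarith)) h1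

lemma psi_odd (y : ℝ) : Psi (-y) = -Psi y := by
  have : Psi (-y) = ∫ s in (0:ℝ)..(-y), gpdf (-s) := by
    unfold Psi; congr 1; ext s; unfold gpdf; ring_nf
  rw [this, intervalIntegral.integral_comp_neg gpdf, neg_zero,
    intervalIntegral.integral_symm]
  simp [Psi]

lemma psi_tendsto_atBot : Tendsto Psi atBot (nhds (-Shalf)) := by
  have h : Tendsto (fun y => -Psi (-y)) atBot (nhds (-Shalf)) := by
    exact ((psi_tendsto_atTop.comp tendsto_neg_atBot_atTop).neg)
  refine h.congr fun y => ?_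
  rw [psi_odd, neg_neg]

attribute [irreducible] Psi

lemma key_identity (t xv : ℝ) (ht : t ≠ 0) :
    gpdf ((xv - 1)/t) * (1 - Real.tanh (xv/t^2)) =
    gpdf ((xv + 1)/t) * (1 + Real.tanh (xv/t^2)) := by
  have hc : (0:ℝ) < Real.cosh (xv/t^2) := Real.cosh_pos _
  have h1 : 1 - Real.tanh (xv/t^2) = Real.exp (-(xv/t^2)) / Real.cosh (xv/t^2) := by
    rw [Real.tanh_eq_sinh_div_cosh, ← Real.cosh_sub_sinh]; field_simp
  have h2 : 1 + Real.tanh (xv/t^2) = Real.exp (xv/t^2) / Real.cosh (xv/t^2) := by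
    rw [Real.tanh_eq_sinh_div_cosh, ← Real.cosh_add_sinh]; field_simp
  rw [h1, h2]
  have hch : Real.cosh (xv/t^2) ≠ 0 := ne_of_gt hc
  have hmain : gpdf ((xv - 1)/t) * Real.exp (-(xv/t^2)) = gpdf ((xv + 1)/t) * Real.exp (xv/t^2) := by
    unfold gpdf
    rw [← Real.exp_add, ← Real.exp_add]
    congr 1
    field_simp
    ring
  calc gpdf ((xv - 1)/t) * (Real.exp (-(xv/t^2)) / Real.cosh (xv/t^2))
      = (gpdf ((xv - 1)/t) * Real.exp (-(xv/t^2))) / Real.cosh (xv/t^2) := by ring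
    _ = (gpdf ((xv + 1)/t) * Real.exp (xv/t^2)) / Real.cosh (xv/t^2) := by rw [hmain]
    _ = gpdf ((xv + 1)/t) * (Real.exp (xv/t^2) / Real.cosh (xv/t^2)) := by ring

set_option maxHeartbeats 1000000 in
lemma pos_case (T : ℝ) (hT : 0 < T) (x : ℝ → ℝ)
    (hode : ∀ t ∈ Ioc 0 T,
      HasDerivAt x (x t / t - (1 / t) * Real.tanh (x t / t ^ 2)) t)
    (hpos : ∀ t ∈ Ioc 0 T, 0 < x t) :
    Tendsto x (nhdsWithin 0 (Ioi 0)) (nhds 1) := by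
  set G : ℝ → ℝ := fun t => Psi ((x t - 1)/t) + Psi ((x t + 1)/t) with hGdef
  have hGd : ∀ t ∈ Ioc 0 T, HasDerivAt G 0 t := by
    intro t ht
    obtain ⟨ht0, htT⟩ := ht
    have htne : t ≠ 0 := ne_of_gt ht0
    have hx := hode t ⟨ht0, htT⟩
    have h1 : HasDerivAt (fun s => (x s - 1)/s)
        (((x t / t - (1 / t) * Real.tanh (x t / t ^ 2)) * t - (x t - 1) * 1)/t^2) t :=
      (hx.sub_const 1).div (hasDerivAt_id t) htne
    have h2 : HasDerivAt (fun s => (x s + 1)/s)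
        (((x t / t - (1 / t) * Real.tanh (x t / t ^ 2)) * t - (x t + 1) * 1)/t^2) t :=
      (hx.add_const 1).div (hasDerivAt_id t) htne
    have H1 : HasDerivAt (fun s => Psi ((x s - 1)/s))
        (gpdf ((x t - 1)/t) * (((x t / t - (1 / t) * Real.tanh (x t / t ^ 2)) * t - (x t - 1) * 1)/t^2)) t :=
      HasDerivAt.comp (h := fun s => (x s - 1)/s) t (psi_hasDerivAt ((x t - 1)/t)) h1
    have H2 : HasDerivAt (fun s => Psi ((x s + 1)/s))
        (gpdf ((x t + 1)/t) * (((x t / t - (1 / t) * Real.tanh (x t / t ^ 2)) * t - (x t + 1) * 1)/t^2)) t :=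
      HasDerivAt.comp (h := fun s => (x s + 1)/s) t (psi_hasDerivAt ((x t + 1)/t)) h2
    have Hsum := H1.add H2
    have hd1 : (x t / t - (1 / t) * Real.tanh (x t / t ^ 2)) * t - (x t - 1) * 1
        = 1 - Real.tanh (x t / t ^ 2) := by field_simp; ring
    have hd2 : (x t / t - (1 / t) * Real.tanh (x t / t ^ 2)) * t - (x t + 1) * 1
        = -1 - Real.tanh (x t / t ^ 2) := by field_simp; ring
    rw [hd1, hd2] at Hsum
    have hzero : gpdf ((x t - 1)/t) * ((1 - Real.tanh (x t / t ^ 2))/t^2)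
        + gpdf ((x t + 1)/t) * ((-1 - Real.tanh (x t / t ^ 2))/t^2) = 0 := by
      have hkey := key_identity t (x t) htne
      have ht2 : (t:ℝ)^2 ≠ 0 := pow_ne_zero 2 htne
      field_simp
      linear_combination hkey
    rw [hzero] at Hsum
    exact Hsum
  have hGc : ∀ t ∈ Ioc 0 T, G t = G T := by
    intro t ht
    rcases eq_or_lt_of_le ht.2 with h | h
    · rw [h]
    · have hcont : ContinuousOn G (Icc t T) := fun s hs =>
        (hGd s ⟨lt_of_lt_of_le ht.1 hs.1, hs.2⟩).continuousAt.continuousWithinAt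
      obtain ⟨c, _, hc⟩ := exists_hasDerivAt_eq_slope G (fun _ => 0) h hcont
        (fun s hs => hGd s ⟨lt_trans ht.1 hs.1, le_of_lt hs.2⟩)
      have hTt : T - t ≠ 0 := sub_ne_zero.mpr (ne_of_gt h)
      have : G T - G t = 0 := by
        field_simp at hc
        linarith [hc]
      linarith
  have hxT := hpos T ⟨hT, le_refl T⟩
  have hc0 : 0 < G T := by
    have h1 : Psi (-(1/T)) < Psi ((x T - 1)/T) := by
      apply psi_mono
      rw [neg_div'] 
      exact (div_lt_div_iff_of_pos_right hT).mpr (by linarith)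
    have h2 : Psi (1/T) < Psi ((x T + 1)/T) :=
      psi_mono ((div_lt_div_iff_of_pos_right hT).mpr (by linarith))
    have h3 : Psi (-(1/T)) = -Psi (1/T) := psi_odd _
    simp only [hGdef]
    linarith
  have hc2 : G T < Shalf + Shalf := by
    have := psi_lt_shalf ((x T - 1)/T)
    have := psi_lt_shalf ((x T + 1)/T)
    simp only [hGdef]
    linarith
  rw [Metric.tendsto_nhds]
  intro ε hε
  have hIoc : Ioc (0:ℝ) T ∈ nhdsWithin 0 (Ioi 0) :=
    Ioc_mem_nhdsGT hT
  have hinv : Tendsto (fun t : ℝ => t⁻¹) (nhdsWithin 0 (Ioi 0)) atTop :=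
    tendsto_inv_nhdsGT_zero
  have hinvε : Tendsto (fun t : ℝ => ε * t⁻¹) (nhdsWithin 0 (Ioi 0)) atTop :=
    hinv.const_mul_atTop hε
  have hA : Tendsto (fun t : ℝ => Psi (ε * t⁻¹) + Psi t⁻¹) (nhdsWithin 0 (Ioi 0))
      (nhds (Shalf + Shalf)) :=
    (psi_tendsto_atTop.comp hinvε).add (psi_tendsto_atTop.comp hinv)
  have hB : Tendsto (fun t : ℝ => Psi (-(ε * t⁻¹)) + Shalf) (nhdsWithin 0 (Ioi 0))
      (nhds (-Shalf + Shalf)) := by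
    have hneg : Tendsto (fun t : ℝ => -(ε * t⁻¹)) (nhdsWithin 0 (Ioi 0)) atBot :=
      tendsto_neg_atTop_atBot.comp hinvε
    exact (psi_tendsto_atBot.comp hneg).add tendsto_const_nhds
  have ev1 : ∀ᶠ t in nhdsWithin 0 (Ioi 0), G T < Psi (ε * t⁻¹) + Psi t⁻¹ :=
    hA.eventually (eventually_gt_nhds hc2)
  have ev2 : ∀ᶠ t in nhdsWithin 0 (Ioi 0), Psi (-(ε * t⁻¹)) + Shalf < G T :=
    hB.eventually (eventually_lt_nhds (by linarith : -Shalf + Shalf < G T))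
  filter_upwards [hIoc, ev1, ev2] with t ht h1 h2
  rw [Real.dist_eq]
  by_contra hcon
  push_neg at hcon
  have ht0 : (0:ℝ) < t := ht.1
  have hGt : G t = G T := hGc t ht
  have hxt := hpos t ht
  rcases le_abs.mp hcon with hcase | hcase
  · -- x t - 1 ≥ ε
    have e1 : Psi (ε * t⁻¹) ≤ Psi ((x t - 1)/t) := by
      apply psi_mono.monotone
      rw [← div_eq_mul_inv]
      exact div_le_div_of_nonneg_right hcase ht0.le
    have e2 : Psi t⁻¹ ≤ Psi ((x t + 1)/t) := by
      apply psi_mono.monotone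
      rw [← one_div]
      exact div_le_div_of_nonneg_right (by linarith) ht0.le
    have hGt' : Psi ((x t - 1)/t) + Psi ((x t + 1)/t) = G T := hGc t ht
    linarith
  · -- -(x t - 1) ≥ ε
    have e1 : Psi ((x t - 1)/t) ≤ Psi (-(ε * t⁻¹)) := by
      apply psi_mono.monotone
      rw [← div_eq_mul_inv, ← neg_div]
      exact div_le_div_of_nonneg_right (by linarith) ht0.le
    have e2 : Psi ((x t + 1)/t) < Shalf := psi_lt_shalf _
    have hGt' : Psi ((x t - 1)/t) + Psi ((x t + 1)/t) = G T := hGc t ht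
    linarith

/-- **Trajectories converge to the data manifold.** Let `T > 0` and let `x : (0, T] → ℝ` be
differentiable, satisfying the probability-flow ODE
`x′(t) = x(t)/t − (1/t)·tanh(x(t)/t²)` on `(0, T]`. If `x(t) > 0` for all `t ∈ (0, T]`, then
`x(t) → 1` as `t → 0⁺`; if `x(t) < 0` for all `t ∈ (0, T]`, then `x(t) → −1` as `t → 0⁺`. -/
theorem pf_ode_limit_at_zero (T : ℝ) (hT : 0 < T)
    (x : ℝ → ℝ)
    (hode : ∀ t ∈ Ioc 0 T,
      HasDerivAt x (x t / t - (1 / t) * Real.tanh (x t / t ^ 2)) t) :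
    ((∀ t ∈ Ioc 0 T, 0 < x t) →
      Tendsto x (nhdsWithin 0 (Ioi 0)) (nhds 1)) ∧
    ((∀ t ∈ Ioc 0 T, x t < 0) →
      Tendsto x (nhdsWithin 0 (Ioi 0)) (nhds (-1))) := by
  constructor
  · exact pos_case T hT x hode
  · intro hneg
    have hode' : ∀ t ∈ Ioc 0 T,
        HasDerivAt (fun s => -(x s)) ((-(x t)) / t - (1 / t) * Real.tanh ((-(x t)) / t ^ 2)) t := by
      intro t ht
      have h := (hode t ht).neg
      refine h.congr_deriv ?_
      rw [neg_div, neg_div, Real.tanh_neg]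
      ring
    have hpos' : ∀ t ∈ Ioc 0 T, 0 < -(x t) := fun t ht => neg_pos.mpr (hneg t ht)
    have h := pos_case T hT (fun s => -(x s)) hode' hpos'
    have := h.neg
    simpa using this
end
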